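/- One has ∑'_{(m,n)∈ℤ², m even and n even, (m,n)≠(0,0)} 1/(m² + n²)² + ∑'_{(m,n)∈ℤ², m even, (m,n)≠(0,0)} 1/(m² + n²)² = ∑'_{(m,n)∈ℤ²∖{(0,0)}} m²/(m² + n²)³. -/

import Mathlib

noncomputable def fF (p : ℤ × ℤ) : ℝ := 1 / ((p.1 : ℝ) ^ 2 + (p.2 : ℝ) ^ 2) ^ 2

lemma fF_nonneg (p : ℤ × ℤ) : 0 ≤ fF p := by unfold fF; positivity

lemma summable_fF : Summable fF := by
  have h4 := EisensteinSeries.summable_one_div_norm_rpow (k := 4) (by norm_num)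
  have h5 := ((finTwoArrowEquiv ℤ).symm.summable_iff
    (f := fun x : Fin 2 → ℤ => ‖x‖ ^ (-4 : ℝ))).mpr h4
  refine Summable.of_nonneg_of_le fF_nonneg (fun p => ?_) h5
  obtain ⟨m, n⟩ := p
  simp only [Function.comp_apply]
  rw [EisensteinSeries.norm_eq_max_natAbs]
  have e0 : ((finTwoArrowEquiv ℤ).symm (m, n)) 0 = m := rfl
  have e1 : ((finTwoArrowEquiv ℤ).symm (m, n)) 1 = n := rfl
  rw [e0, e1]
  have hM0 : (0:ℝ) ≤ ((m.natAbs ⊔ n.natAbs : ℕ) : ℝ) := by positivity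
  have hMr : ((m.natAbs ⊔ n.natAbs : ℕ) : ℝ) ^ (-4 : ℝ)
      = 1 / ((m.natAbs ⊔ n.natAbs : ℕ) : ℝ) ^ 4 := by
    rw [Real.rpow_neg hM0, one_div, show (4:ℝ) = ((4:ℕ):ℝ) by norm_num,
      Real.rpow_natCast]
  rw [hMr]
  have h1 : ((m.natAbs : ℝ)) ^ 2 = (m : ℝ) ^ 2 := by rw [Nat.cast_natAbs, Int.cast_abs, sq_abs]
  have h2 : ((n.natAbs : ℝ)) ^ 2 = (n : ℝ) ^ 2 := by rw [Nat.cast_natAbs, Int.cast_abs, sq_abs]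
  rcases Nat.eq_zero_or_pos (m.natAbs ⊔ n.natAbs) with h0 | h0
  · have hm : m = 0 := by omega
    have hn : n = 0 := by omega
    simp [fF, hm, hn, h0]
  · have hMpos : (0:ℝ) < ((m.natAbs ⊔ n.natAbs : ℕ) : ℝ) := by exact_mod_cast h0
    have hsq : ((m.natAbs ⊔ n.natAbs : ℕ) : ℝ) ^ 2 ≤ (m : ℝ) ^ 2 + (n : ℝ) ^ 2 := by
      rcases le_total m.natAbs n.natAbs with h | h
      · rw [sup_eq_right.mpr h]
        push_cast
        nlinarith [sq_nonneg (m : ℝ)]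
      · rw [sup_eq_left.mpr h]
        push_cast
        nlinarith [sq_nonneg (n : ℝ)]
    have h4le : ((m.natAbs ⊔ n.natAbs : ℕ) : ℝ) ^ 4 ≤ ((m : ℝ) ^ 2 + (n : ℝ) ^ 2) ^ 2 := by
      nlinarith
    exact one_div_le_one_div_of_le (by positivity) h4le

lemma summable_ite (P : ℤ × ℤ → Prop) [DecidablePred P] {f : ℤ × ℤ → ℝ} (hf : Summable f) :
    Summable fun p => if P p then f p else 0 := by
  refine (hf.indicator {x | P x}).congr fun p => ?_
  by_cases h : P p <;> simp [Set.indicator_apply, h]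

lemma fF_swap (p : ℤ × ℤ) : fF (p.2, p.1) = fF p := by unfold fF; ring_nf

lemma tsum_ite_add_ite (P Q : ℤ × ℤ → Prop) [DecidablePred P] [DecidablePred Q]
    (h : ∀ p, (P p ↔ ¬ Q p) → False) : True := trivial

theorem key :
    (∑' p : ℤ × ℤ, (if Even p.1 ∧ Even p.2 then fF p else 0))
      + (∑' p : ℤ × ℤ, (if Even p.1 then fF p else 0))
      = ∑' p : ℤ × ℤ, (p.1 : ℝ) ^ 2 / ((p.1 : ℝ) ^ 2 + (p.2 : ℝ) ^ 2) ^ 3 := by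
  classical
  have hS := summable_fF
  -- summabilities
  have sEE := summable_ite (fun p => Even p.1 ∧ Even p.2) hS
  have sEm := summable_ite (fun p => Even p.1) hS
  have sEO := summable_ite (fun p => Even p.1 ∧ ¬ Even p.2) hS
  have sOE := summable_ite (fun p => ¬ Even p.1 ∧ Even p.2) hS
  have sOO := summable_ite (fun p => ¬ Even p.1 ∧ ¬ Even p.2) hS
  set S := ∑' p : ℤ × ℤ, fF p with hSdef
  set EE := ∑' p : ℤ × ℤ, (if Even p.1 ∧ Even p.2 then fF p else 0) with hEEdef
  set EO := ∑' p : ℤ × ℤ, (if Even p.1 ∧ ¬ Even p.2 then fF p else 0) with hEOdef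
  set OE := ∑' p : ℤ × ℤ, (if ¬ Even p.1 ∧ Even p.2 then fF p else 0) with hOEdef
  set OO := ∑' p : ℤ × ℤ, (if ¬ Even p.1 ∧ ¬ Even p.2 then fF p else 0) with hOOdef
  -- split: Em = EE + EO
  have hEm : (∑' p : ℤ × ℤ, (if Even p.1 then fF p else 0)) = EE + EO := by
    rw [hEEdef, hEOdef, ← Summable.tsum_add sEE sEO]
    refine tsum_congr fun p => ?_
    by_cases h1 : Even p.1 <;> by_cases h2 : Even p.2 <;> simp [h1, h2]
  -- split: S = EE + EO + OE + OO
  have hSsplit : S = EE + EO + OE + OO := by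
    rw [hSdef, hEEdef, hEOdef, hOEdef, hOOdef,
      ← Summable.tsum_add sEE sEO, ← Summable.tsum_add (sEE.add sEO) sOE, ← Summable.tsum_add ((sEE.add sEO).add sOE) sOO]
    refine tsum_congr fun p => ?_
    by_cases h1 : Even p.1 <;> by_cases h2 : Even p.2 <;> simp [h1, h2]
  -- EE = S/16
  have hEE16 : EE = (1/16) * S := by
    rw [hEEdef, hSdef]
    have hinj : Function.Injective (fun p : ℤ × ℤ => ((2*p.1, 2*p.2) : ℤ × ℤ)) := by
      intro a b h
      simp only [Prod.mk.injEq] at h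
      exact Prod.ext (by omega) (by omega)
    have hsupp : Function.support (fun p : ℤ × ℤ => if Even p.1 ∧ Even p.2 then fF p else 0)
        ⊆ Set.range (fun p : ℤ × ℤ => ((2*p.1, 2*p.2) : ℤ × ℤ)) := by
      intro p hp
      rw [Function.mem_support] at hp
      by_cases h : Even p.1 ∧ Even p.2
      · obtain ⟨⟨a, ha⟩, ⟨b, hb⟩⟩ := h
        refine ⟨(a, b), ?_⟩
        show ((2*a, 2*b) : ℤ × ℤ) = p
        rw [Prod.ext_iff]
        constructor <;> (simp only) <;> omega
      · rw [if_neg h] at hp; exact absurd rfl hp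
    rw [← hinj.tsum_eq hsupp, ← tsum_mul_left]
    refine tsum_congr fun p => ?_
    have he : Even (2*p.1) ∧ Even (2*p.2) := ⟨⟨p.1, by ring⟩, ⟨p.2, by ring⟩⟩
    simp only [he, if_true, and_self, ite_true, fF]
    push_cast
    rw [show ((2*(p.1:ℝ))^2 + (2*(p.2:ℝ))^2)^2 = 16 * (((p.1:ℝ))^2 + ((p.2:ℝ))^2)^2 by ring]
    rw [div_mul_div_comm]
    norm_num
  -- EO = OE
  have hEOOE : EO = OE := by
    rw [hEOdef, hOEdef]
    rw [← (Equiv.prodComm ℤ ℤ).tsum_eq (fun p : ℤ × ℤ => if ¬ Even p.1 ∧ Even p.2 then fF p else 0)]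
    refine tsum_congr fun p => ?_
    simp only [Equiv.prodComm_apply, Prod.swap]
    rw [fF_swap ⟨p.2, p.1⟩]
    by_cases h1 : Even p.1 <;> by_cases h2 : Even p.2 <;> simp [h1, h2]
  -- OO = (1/4) * (EO + OE)
  have hOO4 : OO = (1/4) * (EO + OE) := by
    rw [hOOdef, hEOdef, hOEdef, ← Summable.tsum_add sEO sOE, ← tsum_mul_left]
    have hinj : Function.Injective (fun p : ℤ × ℤ => ((p.1 + p.2, p.1 - p.2) : ℤ × ℤ)) := by
      intro a b h
      simp only [Prod.mk.injEq] at h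
      exact Prod.ext (by omega) (by omega)
    have hsupp : Function.support (fun p : ℤ × ℤ => if ¬ Even p.1 ∧ ¬ Even p.2 then fF p else 0)
        ⊆ Set.range (fun p : ℤ × ℤ => ((p.1 + p.2, p.1 - p.2) : ℤ × ℤ)) := by
      intro p hp
      rw [Function.mem_support] at hp
      by_cases h : ¬ Even p.1 ∧ ¬ Even p.2
      · obtain ⟨h1, h2⟩ := h
        rw [Int.not_even_iff_odd] at h1 h2
        obtain ⟨a, ha⟩ := h1; obtain ⟨b, hb⟩ := h2
        refine ⟨(a + b + 1, a - b), ?_⟩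
        show (((a+b+1) + (a-b), (a+b+1) - (a-b)) : ℤ × ℤ) = p
        rw [Prod.ext_iff]
        constructor <;> (simp only) <;> omega
      · rw [if_neg h] at hp; exact absurd rfl hp
    rw [← hinj.tsum_eq hsupp]
    refine tsum_congr fun p => ?_
    obtain ⟨u, v⟩ := p
    have hf : fF (u + v, u - v) = (1/4) * fF (u, v) := by
      simp only [fF]
      push_cast
      rw [show (((u:ℝ) + v)^2 + ((u:ℝ) - v)^2)^2 = 4 * (((u:ℝ))^2 + ((v:ℝ))^2)^2 by ring]
      rw [div_mul_div_comm]
      norm_num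
    by_cases h1 : Even u <;> by_cases h2 : Even v
    · have : Even (u + v) := h1.add h2
      simp only [this, not_true, false_and, ite_false, h1, h2, not_false_iff, and_true,
        true_and, and_false, if_false]
      simp [h1, h2]
    · have : ¬ Even (u + v) := by
        simp [Int.even_add, h1, h2]
      have h' : ¬ Even (u - v) := by
        simp [Int.even_sub, h1, h2]
      simp [this, h', h1, h2, hf]
    · have : ¬ Even (u + v) := by
        simp [Int.even_add, h1, h2]
      have h' : ¬ Even (u - v) := by
        simp [Int.even_sub, h1, h2]
      simp [this, h', h1, h2, hf]
    · have : Even (u + v) := by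
        rw [Int.even_add]; tauto
      simp [this, h1, h2]
  -- R = S/2
  have sR : Summable fun p : ℤ × ℤ => (p.1 : ℝ) ^ 2 / ((p.1 : ℝ) ^ 2 + (p.2 : ℝ) ^ 2) ^ 3 := by
    refine Summable.of_nonneg_of_le (fun p => by positivity) (fun p => ?_) hS
    obtain ⟨m, n⟩ := p
    simp only [fF]
    rcases eq_or_ne ((m:ℝ)^2 + (n:ℝ)^2) 0 with h0 | h0
    · rw [h0]; simp
    · have hpos : (0:ℝ) < (m:ℝ)^2 + (n:ℝ)^2 := by
        rcases lt_or_eq_of_le (by positivity : (0:ℝ) ≤ (m:ℝ)^2 + (n:ℝ)^2) with h | h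
        · exact h
        · exact absurd h.symm h0
      rw [show ((m:ℝ)^2 + (n:ℝ)^2)^3 = ((m:ℝ)^2 + (n:ℝ)^2) * ((m:ℝ)^2 + (n:ℝ)^2)^2 by ring]
      rw [div_mul_eq_div_div]
      apply div_le_div_of_nonneg_right ?_ (by positivity)
      exact div_le_one_of_le₀ (by nlinarith [sq_nonneg (n:ℝ)]) hpos.le
  have sR2 : Summable fun p : ℤ × ℤ => (p.2 : ℝ) ^ 2 / ((p.1 : ℝ) ^ 2 + (p.2 : ℝ) ^ 2) ^ 3 := by
    refine Summable.of_nonneg_of_le (fun p => by positivity) (fun p => ?_) hS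
    obtain ⟨m, n⟩ := p
    simp only [fF]
    rcases eq_or_ne ((m:ℝ)^2 + (n:ℝ)^2) 0 with h0 | h0
    · rw [h0]; simp
    · have hpos : (0:ℝ) < (m:ℝ)^2 + (n:ℝ)^2 := by
        rcases lt_or_eq_of_le (by positivity : (0:ℝ) ≤ (m:ℝ)^2 + (n:ℝ)^2) with h | h
        · exact h
        · exact absurd h.symm h0
      rw [show ((m:ℝ)^2 + (n:ℝ)^2)^3 = ((m:ℝ)^2 + (n:ℝ)^2) * ((m:ℝ)^2 + (n:ℝ)^2)^2 by ring]
      rw [div_mul_eq_div_div]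
      apply div_le_div_of_nonneg_right ?_ (by positivity)
      exact div_le_one_of_le₀ (by nlinarith [sq_nonneg (m:ℝ)]) hpos.le
  set R := ∑' p : ℤ × ℤ, (p.1 : ℝ) ^ 2 / ((p.1 : ℝ) ^ 2 + (p.2 : ℝ) ^ 2) ^ 3 with hRdef
  have hRR2 : (∑' p : ℤ × ℤ, (p.2 : ℝ) ^ 2 / ((p.1 : ℝ) ^ 2 + (p.2 : ℝ) ^ 2) ^ 3) = R := by
    rw [hRdef]
    rw [← (Equiv.prodComm ℤ ℤ).tsum_eq
      (fun p : ℤ × ℤ => (p.1 : ℝ) ^ 2 / ((p.1 : ℝ) ^ 2 + (p.2 : ℝ) ^ 2) ^ 3)]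
    refine tsum_congr fun p => ?_
    simp only [Equiv.prodComm_apply, Prod.swap]
    ring_nf
  have hRS : R + R = S := by
    nth_rewrite 2 [← hRR2]
    rw [hRdef, hSdef, ← Summable.tsum_add sR sR2]
    refine tsum_congr fun p => ?_
    obtain ⟨m, n⟩ := p
    simp only [fF]
    rw [← add_div]
    rcases eq_or_ne ((m:ℝ)^2 + (n:ℝ)^2) 0 with h0 | h0
    · rw [h0]; simp
    · rw [show ((m:ℝ)^2 + (n:ℝ)^2)^3 = ((m:ℝ)^2 + (n:ℝ)^2) * ((m:ℝ)^2 + (n:ℝ)^2)^2 by ring]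
      rw [div_mul_eq_div_div, div_self h0]
  rw [hEm]
  linarith

theorem stmt5 :
    (∑' p : {p : ℤ × ℤ // p ≠ 0}, (if Even p.1.1 ∧ Even p.1.2 then (1 : ℝ) / ((p.1.1 : ℝ) ^ 2 + (p.1.2 : ℝ) ^ 2) ^ 2 else 0)) + (∑' p : {p : ℤ × ℤ // p ≠ 0}, (if Even p.1.1 then (1 : ℝ) / ((p.1.1 : ℝ) ^ 2 + (p.1.2 : ℝ) ^ 2) ^ 2 else 0))
      = (∑' p : {p : ℤ × ℤ // p ≠ 0}, (p.1.1 : ℝ) ^ 2 / ((p.1.1 : ℝ) ^ 2 + (p.1.2 : ℝ) ^ 2) ^ 3) := by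
  classical
  have h1 : (∑' p : {p : ℤ × ℤ // p ≠ 0},
      (if Even p.1.1 ∧ Even p.1.2 then (1 : ℝ) / ((p.1.1 : ℝ) ^ 2 + (p.1.2 : ℝ) ^ 2) ^ 2 else 0))
      = ∑' p : ℤ × ℤ, (if Even p.1 ∧ Even p.2 then fF p else 0) := by
    have := tsum_subtype_eq_of_support_subset
      (f := fun p : ℤ × ℤ => if Even p.1 ∧ Even p.2 then fF p else 0)
      (s := {p : ℤ × ℤ | p ≠ 0})
      (by
        intro p hp
        rw [Function.mem_support] at hp
        intro h0
        apply hp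
        subst h0
        simp [fF])
    rw [← this]
    rfl
  have h2 : (∑' p : {p : ℤ × ℤ // p ≠ 0},
      (if Even p.1.1 then (1 : ℝ) / ((p.1.1 : ℝ) ^ 2 + (p.1.2 : ℝ) ^ 2) ^ 2 else 0))
      = ∑' p : ℤ × ℤ, (if Even p.1 then fF p else 0) := by
    have := tsum_subtype_eq_of_support_subset
      (f := fun p : ℤ × ℤ => if Even p.1 then fF p else 0)
      (s := {p : ℤ × ℤ | p ≠ 0})
      (by
        intro p hp
        rw [Function.mem_support] at hp
        intro h0
        apply hp
        subst h0
        simp [fF])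
    rw [← this]
    rfl
  have h3 : (∑' p : {p : ℤ × ℤ // p ≠ 0}, (p.1.1 : ℝ) ^ 2 / ((p.1.1 : ℝ) ^ 2 + (p.1.2 : ℝ) ^ 2) ^ 3)
      = ∑' p : ℤ × ℤ, (p.1 : ℝ) ^ 2 / ((p.1 : ℝ) ^ 2 + (p.2 : ℝ) ^ 2) ^ 3 := by
    have := tsum_subtype_eq_of_support_subset
      (f := fun p : ℤ × ℤ => (p.1 : ℝ) ^ 2 / ((p.1 : ℝ) ^ 2 + (p.2 : ℝ) ^ 2) ^ 3)
      (s := {p : ℤ × ℤ | p ≠ 0})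
      (by
        intro p hp
        rw [Function.mem_support] at hp
        intro h0
        apply hp
        subst h0
        simp)
    rw [← this]
    rfl
  rw [h1, h2, h3]
  exact key
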